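/- arXiv:hep-th/9309118 — 2 statements merged into one kernel-verified Lean document; each statement's English description precedes it below -/
import Mathlib

section
/- Let N ≥ 1 and let z ∈ (ℂ∖{0})^N satisfy max_j |z_j q| < min_j |z_j q⁻¹|, and let r be any radius with max_j |z_j q| < r < min_j |z_j q⁻¹|. Then for every integer k ≥ 0, the contour integral over the anticlockwise circle |x| = r satisfies ∮_{|x|=r} x^{k−1} · ( ∏_{j=1}^N (x − z_jτ) − τ^{2N+4k} ∏_{j=1}^N (x − z_jτ⁻¹) ) · Ψ(x|z₁,…,z_N) dx = 0. -/
open Finset Function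

noncomputable section

/-- The infinite product `(z;p)_∞ = ∏_{k≥0} (1 - z p^k)`. -/
def pochInf (z p : ℂ) : ℂ := ∏' k : ℕ, (1 - z * p ^ k)

/-- `ψ(z) = 1/((zq;q⁴)_∞ (z⁻¹q;q⁴)_∞)`. -/
def psiF (q z : ℂ) : ℂ := 1 / (pochInf (z * q) (q ^ 4) * pochInf (z⁻¹ * q) (q ^ 4))

/-- The kernel `Ψ(x₁,…,xₙ|z₁,…,z_N) = ϑ(x|z)·∏_{μ,j} ψ(x_μ/z_j)`. -/
def kerPsi (q : ℂ) {n N : ℕ} (θ : (Fin n → ℂ) → (Fin N → ℂ) → ℂ)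
    (x : Fin n → ℂ) (z : Fin N → ℂ) : ℂ :=
  θ x z * ∏ μ : Fin n, ∏ j : Fin N, psiF q (x μ / z j)

/-- One-variable kernel `Ψ(x|z₁,…,z_N) = ϑ(x|z)·∏_j ψ(x/z_j)`. -/
def kerPsi1 (q : ℂ) {N : ℕ} (θ : ℂ → (Fin N → ℂ) → ℂ) (x : ℂ) (z : Fin N → ℂ) : ℂ :=
  θ x z * ∏ j : Fin N, psiF q (x / z j)

/-- Elementary symmetric polynomial `σ_κ(a₁,…,a_m)`. -/
def esym {m : ℕ} (a : Fin m → ℂ) (κ : ℕ) : ℂ :=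
  ∑ s ∈ Finset.powersetCard κ (Finset.univ : Finset (Fin m)), ∏ i ∈ s, a i

/-- Complete homogeneous symmetric polynomial `σ̃_κ(a₁,…,a_m)`. -/
def hsym {m : ℕ} (a : Fin m → ℂ) (κ : ℕ) : ℂ :=
  ∑ μ ∈ (Finset.univ : Finset (Fin m)).sym κ, (Multiset.map a (μ : Multiset (Fin m))).prod

/-- `h^{(m)}(x|z) = x⁻¹(∏_j (x - z_jτ) - τ^{2m} ∏_j (x - z_jτ⁻¹))` as a polynomial in `x`
(the bracket vanishes at `x = 0`, so division is exact). -/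
def hN (τ : ℂ) {m : ℕ} (z : Fin m → ℂ) : Polynomial ℂ :=
  ((∏ j : Fin m, (Polynomial.X - Polynomial.C (z j * τ)))
      - Polynomial.C (τ ^ (2 * m)) * ∏ j : Fin m, (Polynomial.X - Polynomial.C (z j * τ⁻¹)))
    /ₘ Polynomial.X

/-- `φ^{(nl)}_{λκ}(a|b)`. -/
def phiP (τ : ℂ) {n l : ℕ} (lam κ : ℕ) (a : Fin n → ℂ) (b : Fin l → ℂ) : ℂ :=
  esym b κ - ∑ β ∈ Finset.Icc lam κ, ∑ α ∈ Finset.Icc lam β,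
    (-1 : ℂ) ^ (β - α) * τ ^ (2 * β) * esym b (κ - β) * esym a α * hsym a (β - α)

/-- `f^{(nl)}_λ(x|a|b) = Σ_{κ=0}^{l−n+λ−2} (1 − τ^{2(l−n+λ−1−κ)})(−τ)^κ φ^{(nl)}_{λκ}(a|b)
x^{l−n+λ−2−κ}` (empty sum if `l−n+λ−2 < 0`). -/
def fP (τ : ℂ) {n l : ℕ} (lam : ℕ) (x : ℂ) (a : Fin n → ℂ) (b : Fin l → ℂ) : ℂ :=
  ∑ κ ∈ Finset.range ((l : ℤ) - n + lam - 1).toNat,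
    (1 - τ ^ (2 * (((l : ℤ) - n + lam - 1).toNat - κ))) * (-τ) ^ κ * phiP τ lam κ a b
      * x ^ (((l : ℤ) - n + lam - 1).toNat - 1 - κ)

/-- `g^{(n)}_λ(x|a) = Σ_{κ=0}^{λ−2} (1 − τ^{2(λ−1−κ)})(−τ)^κ σ_κ(a) x^{λ−2−κ}`. -/
def gP (τ : ℂ) {n : ℕ} (lam : ℕ) (x : ℂ) (a : Fin n → ℂ) : ℂ :=
  ∑ κ ∈ Finset.range (lam - 1),
    (1 - τ ^ (2 * (lam - 1 - κ))) * (-τ) ^ κ * esym a κ * x ^ (lam - 2 - κ)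

/-- `A^{(nl)}_λ(x|a|b)`. -/
def AP (τ : ℂ) {n l : ℕ} (lam : ℕ) (x : ℂ) (a : Fin n → ℂ) (b : Fin l → ℂ) : ℂ :=
  (∏ j : Fin n, (x - a j * τ)) * fP τ lam x a b
    + τ ^ (2 * (l - n + lam - 1)) * (∏ i : Fin l, (x - b i * τ⁻¹)) * gP τ lam x a

/-- `Δ^{(nl)}(x₁,…,xₙ|a|b) = det(A^{(nl)}_λ(x_μ|a|b))_{1 ≤ λ,μ ≤ n}`. -/
def DeltaP (τ : ℂ) {n l : ℕ} (x : Fin n → ℂ) (a : Fin n → ℂ) (b : Fin l → ℂ) : ℂ :=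
  Matrix.det (Matrix.of fun lam μ : Fin n => AP τ ((lam : ℕ) + 1) (x μ) a b)

/-- The explicit `Δ(x|z₁|b₁,…,b_m)` of the case `n = 1` (here `m = N − 1`):
`(x−z₁τ)·Σ_{κ=0}^{N−3}(1−τ^{2(N−2−κ)})(−τ)^κ x^{N−3−κ} Σ_{λ=0}^{κ}(−z₁τ²)^λ σ_{κ−λ}(b)`. -/
def Delta1 (τ : ℂ) {m : ℕ} (x z1 : ℂ) (b : Fin m → ℂ) : ℂ :=
  (x - z1 * τ) * ∑ κ ∈ Finset.range (m - 1),
    (1 - τ ^ (2 * (m - 1 - κ))) * (-τ) ^ κ * x ^ (m - 2 - κ) *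
      ∑ lam ∈ Finset.range (κ + 1), (-(z1 * τ ^ 2)) ^ lam * esym b (κ - lam)

/-- Iterated contour integral over `n` copies of the anticlockwise circle `|x| = ρ`. -/
def multiCircle : (n : ℕ) → ((Fin n → ℂ) → ℂ) → ℝ → ℂ
  | 0, f, _ => f (fun i => i.elim0)
  | n + 1, f, ρ => ∮ t in C(0, ρ), multiCircle n (fun x => f (Fin.cons t x)) ρ

/-- `H(a|b) = ∮⋯∮ F(x|a,b) Ψ(x|a,b) dx₁⋯dxₙ` with
`F = Δ^{(nl)}(x|a|b)/∏_{j,i}(b_i − a_jτ²)`. -/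
def Hfun (q τ : ℂ) {n l : ℕ} (θ : (Fin n → ℂ) → (Fin (n + l) → ℂ) → ℂ)
    (a : Fin n → ℂ) (b : Fin l → ℂ) (ρ : ℝ) : ℂ :=
  multiCircle n (fun x =>
    (DeltaP τ x a b / ∏ j : Fin n, ∏ i : Fin l, (b i - a j * τ ^ 2)) *
      kerPsi q θ x (Fin.append a b)) ρ

/-- The radius `ρ` separates the poles: `max_i |w_i q| < ρ < min_i |w_i q⁻¹|`
for the tuple `w = (a, b)`. -/
def admissible (q : ℂ) {n l : ℕ} (a : Fin n → ℂ) (b : Fin l → ℂ) (ρ : ℝ) : Prop :=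
  (∀ j, ‖a j * q‖ < ρ) ∧ (∀ j, ρ < ‖a j * q⁻¹‖) ∧
  (∀ i, ‖b i * q‖ < ρ) ∧ (∀ i, ρ < ‖b i * q⁻¹‖)

/-- The denominator of `F` does not vanish: `w_i − w_jτ² ≠ 0` for `1 ≤ j ≤ n < i ≤ N`. -/
def regularF (τ : ℂ) {n l : ℕ} (a : Fin n → ℂ) (b : Fin l → ℂ) : Prop :=
  ∀ (j : Fin n) (i : Fin l), b i - a j * τ ^ 2 ≠ 0

end


section AuxPoch

open Filter Real

noncomputable section

def pochPart (p z : ℂ) (n : ℕ) : ℂ := ∏ k ∈ Finset.range n, (1 - z * p ^ k)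

def pochLim (p z : ℂ) : ℂ := 1 + ∑' m : ℕ, pochPart p z m * (-z * p ^ m)

lemma pochPart_eq_sum (p z : ℂ) (n : ℕ) :
    pochPart p z n = 1 + ∑ m ∈ Finset.range n, pochPart p z m * (-z * p ^ m) := by
  induction n with
  | zero => simp [pochPart]
  | succ n ih =>
    rw [pochPart, Finset.prod_range_succ, ← pochPart, Finset.sum_range_succ]
    linear_combination ih

variable {p : ℂ} (hp : ‖p‖ < 1)
include hp

lemma pochPart_norm_le (z : ℂ) (n : ℕ) (M : ℝ) (hz : ‖z‖ ≤ M) :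
    ‖pochPart p z n‖ ≤ Real.exp (M * (1 - ‖p‖)⁻¹) := by
  have hp0 : (0:ℝ) ≤ ‖p‖ := norm_nonneg p
  have hM : 0 ≤ M := le_trans (norm_nonneg z) hz
  calc ‖pochPart p z n‖ ≤ ∏ k ∈ Finset.range n, (1 + M * ‖p‖ ^ k) := by
        rw [pochPart, norm_prod]
        refine Finset.prod_le_prod (fun i _ => norm_nonneg _) (fun i _ => ?_)
        calc ‖1 - z * p ^ i‖ ≤ ‖(1:ℂ)‖ + ‖z * p ^ i‖ := by
              simpa [sub_eq_add_neg] using norm_add_le 1 (-(z * p ^ i))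
          _ ≤ 1 + M * ‖p‖ ^ i := by
              simp only [norm_one, norm_mul, norm_pow]
              exact add_le_add_right (mul_le_mul_of_nonneg_right hz (pow_nonneg hp0 i)) 1
    _ ≤ ∏ k ∈ Finset.range n, Real.exp (M * ‖p‖ ^ k) := by
        refine Finset.prod_le_prod (fun i _ => by positivity) (fun i _ => ?_)
        simpa [add_comm] using Real.add_one_le_exp (M * ‖p‖ ^ i)
    _ = Real.exp (∑ k ∈ Finset.range n, M * ‖p‖ ^ k) := (Real.exp_sum _ _).symm
    _ ≤ Real.exp (M * (1 - ‖p‖)⁻¹) := by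
        apply Real.exp_le_exp.2
        rw [← Finset.mul_sum]
        apply mul_le_mul_of_nonneg_left _ hM
        rw [← tsum_geometric_of_lt_one hp0 hp]
        exact Summable.sum_le_tsum _ (fun i _ => pow_nonneg hp0 i) (summable_geometric_of_lt_one hp0 hp)

lemma poch_term_bound (z : ℂ) (M : ℝ) (hz : ‖z‖ ≤ M) (m : ℕ) :
    ‖pochPart p z m * (-z * p ^ m)‖ ≤
      Real.exp (M * (1 - ‖p‖)⁻¹) * M * ‖p‖ ^ m := by
  have hp0 : (0:ℝ) ≤ ‖p‖ := norm_nonneg p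
  rw [norm_mul, norm_mul, norm_neg, norm_pow]
  have h1 := pochPart_norm_le hp z m M hz
  have h2 : ‖z‖ * ‖p‖ ^ m ≤ M * ‖p‖ ^ m :=
    mul_le_mul_of_nonneg_right hz (pow_nonneg hp0 m)
  calc ‖pochPart p z m‖ * (‖z‖ * ‖p‖ ^ m)
      ≤ Real.exp (M * (1 - ‖p‖)⁻¹) * (M * ‖p‖ ^ m) :=
        mul_le_mul h1 h2 (by positivity) (Real.exp_nonneg _)
    _ = _ := by ring

lemma poch_summable (z : ℂ) : Summable (fun m => pochPart p z m * (-z * p ^ m)) := by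
  refine Summable.of_norm_bounded (Summable.mul_left
    (Real.exp (‖z‖ * (1 - ‖p‖)⁻¹) * ‖z‖)
    (summable_geometric_of_lt_one (norm_nonneg p) hp)) fun m => ?_
  simpa [mul_assoc] using poch_term_bound hp z (‖z‖) le_rfl m

lemma poch_tendsto (z : ℂ) :
    Filter.Tendsto (fun n => pochPart p z n) Filter.atTop (nhds (pochLim p z)) := by
  have h := ((poch_summable hp z).hasSum.tendsto_sum_nat).const_add 1
  refine h.congr (fun n => ?_)
  exact (pochPart_eq_sum p z n).symm

lemma poch_summable_log (z : ℂ) (hz : ∀ k : ℕ, 1 - z * p ^ k ≠ 0) :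
    Summable (fun k : ℕ => Complex.log (1 - z * p ^ k)) := by
  have hp0 : (0:ℝ) ≤ ‖p‖ := norm_nonneg p
  refine Summable.of_norm_bounded_eventually_nat (g := fun k => 3/2 * (‖z‖ * ‖p‖ ^ k))
    (((summable_geometric_of_lt_one hp0 hp).mul_left _).mul_left _) ?_
  have h0 : Filter.Tendsto (fun k : ℕ => ‖z‖ * ‖p‖ ^ k)
      Filter.atTop (nhds 0) := by
    simpa using (tendsto_pow_atTop_nhds_zero_of_lt_one hp0 hp).const_mul (‖z‖)
  filter_upwards [h0.eventually_le_const (by norm_num : (0:ℝ) < 1/2)] with k hk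
  have habs : ‖-(z * p ^ k)‖ ≤ 1/2 := by
    simpa [norm_neg, norm_mul, norm_pow] using hk
  have := Complex.norm_log_one_add_half_le_self habs
  rw [show (1 : ℂ) + -(z * p ^ k) = 1 - z * p ^ k by ring] at this
  refine this.trans ?_
  simp only [norm_neg, norm_mul, norm_pow]
  exact le_rfl

lemma poch_hasProd (z : ℂ) : HasProd (fun k : ℕ => 1 - z * p ^ k) (pochLim p z) := by
  by_cases hz : ∀ k : ℕ, 1 - z * p ^ k ≠ 0
  · have hm : Multipliable (fun k : ℕ => 1 - z * p ^ k) :=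
      Complex.multipliable_of_summable_log (poch_summable_log hp z hz)
    have h2 : Filter.Tendsto (fun n => pochPart p z n) Filter.atTop
        (nhds (∏' k, (1 - z * p ^ k))) := hm.hasProd.tendsto_prod_nat
    have heq := tendsto_nhds_unique (poch_tendsto hp z) h2
    rw [show pochLim p z = ∏' k, (1 - z * p ^ k) from heq]
    exact hm.hasProd
  · push_neg at hz; obtain ⟨k₀, hk₀⟩ := hz
    have hzero : pochLim p z = 0 := by
      refine tendsto_nhds_unique (poch_tendsto hp z) ?_
      refine Filter.Tendsto.congr' ?_ (tendsto_const_nhds (x := (0:ℂ)))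
      filter_upwards [Filter.eventually_ge_atTop (k₀+1)] with n hn
      exact (Finset.prod_eq_zero (Finset.mem_range.2 hn) hk₀).symm
    rw [hzero]
    refine Filter.Tendsto.congr' ?_ (tendsto_const_nhds (x := (0:ℂ)))
    filter_upwards [Filter.eventually_ge_atTop ({k₀} : Finset ℕ)] with s hs
    exact (Finset.prod_eq_zero (hs (Finset.mem_singleton_self k₀)) hk₀).symm

lemma pochInf_eq (z : ℂ) : pochInf z p = pochLim p z := (poch_hasProd hp z).tprod_eq

lemma pochInf_ne_zero (z : ℂ) (hz : ∀ k : ℕ, 1 - z * p ^ k ≠ 0) : pochInf z p ≠ 0 := by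
  have h := Complex.cexp_tsum_eq_tprod (f := fun n => 1 - z * p ^ n)
    (fun n => hz n) (poch_summable_log hp z hz)
  have h2 := h
  rw [pochInf, ← h2]
  exact Complex.exp_ne_zero _

lemma pochInf_shift (z : ℂ) : pochInf z p = (1 - z) * pochInf (z * p) p := by
  rw [pochInf_eq hp, pochInf_eq hp]
  refine tendsto_nhds_unique (poch_tendsto hp z) ?_
  have key : ∀ n, pochPart p z (n+1) = (1 - z) * pochPart p (z * p) n := by
    intro n
    rw [pochPart, Finset.prod_range_succ', pochPart]
    rw [Finset.prod_congr rfl (fun i _ => show 1 - z * p ^ (i+1) = 1 - z * p * p ^ i by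
      rw [pow_succ]; ring)]
    simp [mul_comm]
  have h2 : Filter.Tendsto (fun n => pochPart p z (n+1)) Filter.atTop
      (nhds ((1 - z) * pochLim p (z * p))) := by
    simp only [key]
    exact (poch_tendsto hp (z * p)).const_mul _
  exact (Filter.tendsto_add_atTop_iff_nat 1).mp h2

lemma pochLim_differentiable : Differentiable ℂ (fun z => pochLim p z) := by
  intro z₀
  set M : ℝ := ‖z₀‖ + 1 with hM
  have hM0 : 0 < M := by positivity
  have hmem : z₀ ∈ Metric.ball (0:ℂ) M := by
    rw [Metric.mem_ball, Complex.dist_eq, hM]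
    simpa using lt_add_one (‖z₀‖)
  have hdiff : DifferentiableOn ℂ (fun z => pochLim p z) (Metric.ball 0 M) := by
    have hu : Summable (fun m : ℕ =>
        Real.exp (M * (1 - ‖p‖)⁻¹) * M * ‖p‖ ^ m) :=
      by
        simpa [mul_assoc] using
          (summable_geometric_of_lt_one (norm_nonneg p) hp).mul_left
            (Real.exp (M * (1 - ‖p‖)⁻¹) * M)
    have ht := tendstoUniformlyOn_tsum hu
      (f := fun m (z : ℂ) => pochPart p z m * (-z * p ^ m)) (s := Metric.ball 0 M)
      (fun m x hx => by
        have : ‖x‖ ≤ M := le_of_lt (by simpa [Complex.dist_eq] using Metric.mem_ball.mp hx)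
        simpa using poch_term_bound hp x M this m)
    have hdsum : DifferentiableOn ℂ (fun z : ℂ => ∑' m, pochPart p z m * (-z * p ^ m))
        (Metric.ball 0 M) := by
      refine (ht.tendstoLocallyUniformlyOn).differentiableOn ?_ Metric.isOpen_ball
      refine Filter.Eventually.of_forall (fun t => ?_)
      refine DifferentiableOn.fun_sum (fun m _ => ?_)
      have h1 : Differentiable ℂ (fun z : ℂ => pochPart p z m * (-z * p ^ m)) := by
        apply Differentiable.mul
        · exact Differentiable.fun_finsetProd (fun k _ =>
            (differentiable_const 1).sub ((differentiable_id.mul (differentiable_const _))))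
        · exact (differentiable_id.neg.mul (differentiable_const _))
      exact h1.differentiableOn
    exact (differentiableOn_const 1).add hdsum
  exact (hdiff.differentiableAt (Metric.isOpen_ball.mem_nhds hmem))

end

lemma circleMap_mul (a : ℂ) (r : ℝ) (θ : ℝ) :
    a * circleMap 0 r θ = circleMap 0 (‖a‖ * r) (θ + Complex.arg a) := by
  simp only [circleMap, zero_add]
  conv_lhs => rw [← Complex.norm_mul_exp_arg_mul_I a]
  push_cast
  rw [add_mul, Complex.exp_add]
  ring

lemma circleIntegral_scale (f : ℂ → ℂ) (a : ℂ) (r : ℝ) :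
    (∮ x in C(0, ‖a‖ * r), f x) = ∮ y in C(0, r), a * f (a * y) := by
  rw [circleIntegral, circleIntegral]
  set g : ℝ → ℂ := fun θ => deriv (circleMap 0 (‖a‖ * r)) θ •
    f (circleMap 0 (‖a‖ * r) θ) with hg
  have hper : Function.Periodic g (2 * π) := by
    intro x
    simp only [hg, deriv_circleMap, periodic_circleMap 0 (‖a‖ * r) x]
  have hpt : ∀ θ : ℝ, deriv (circleMap 0 r) θ • (a * f (a * circleMap 0 r θ)) =
      g (θ + Complex.arg a) := by
    intro θ
    have hC := circleMap_mul a r θ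
    simp only [hg, deriv_circleMap, smul_eq_mul]
    rw [hC]
    linear_combination Complex.I *
      f (circleMap 0 (‖a‖ * r) (θ + Complex.arg a)) * hC
  calc (∫ θ : ℝ in (0)..2 * π, deriv (circleMap 0 (‖a‖ * r)) θ •
        f (circleMap 0 (‖a‖ * r) θ))
      = ∫ θ : ℝ in (Complex.arg a)..(Complex.arg a + 2 * π), g θ := by
        rw [hper.intervalIntegral_add_eq (Complex.arg a) 0, zero_add]
    _ = ∫ θ : ℝ in (0)..2 * π, g (θ + Complex.arg a) := by
        rw [intervalIntegral.integral_comp_add_right g (Complex.arg a)]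
        congr 1 <;> ring
    _ = ∫ θ : ℝ in (0)..2 * π, deriv (circleMap 0 r) θ • (a * f (a * circleMap 0 r θ)) := by
        simp only [hpt]

lemma factorA {q τ : ℂ} (hq : q ≠ 0) (hτ : τ = q⁻¹) (hp : ‖q^4‖ < 1)
    {zj x : ℂ} (hzj : zj ≠ 0) (hne : x ≠ zj * τ) :
    (x - zj * τ) * psiF q (x / zj) =
      (-zj * τ) / (pochInf (x * q^5 / zj) (q^4) * pochInf (zj * q / x) (q^4)) := by
  have hc : (1 : ℂ) - (x / zj) * q ≠ 0 := by
    intro h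
    apply hne
    rw [sub_eq_zero] at h
    rw [hτ]
    field_simp at h ⊢
    linear_combination -h
  rw [psiF, pochInf_shift hp ((x / zj) * q),
    show x / zj * q * q^4 = x * q^5 / zj by field_simp,
    show (x / zj)⁻¹ * q = zj * q / x by rw [inv_div]; ring,
    show x - zj * τ = (-zj * τ) * (1 - (x / zj) * q) by rw [hτ]; field_simp; ring]
  rw [mul_one_div,
    show (1 - x / zj * q) * pochInf (x * q ^ 5 / zj) (q ^ 4) * pochInf (zj * q / x) (q ^ 4)
      = (1 - x / zj * q) * (pochInf (x * q ^ 5 / zj) (q ^ 4) * pochInf (zj * q / x) (q ^ 4))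
      by ring,
    show -zj * τ * (1 - x / zj * q) = (1 - x / zj * q) * (-zj * τ) by ring,
    mul_div_mul_left _ _ hc]

lemma factorB {q τ : ℂ} (hq : q ≠ 0) (hτ : τ = q⁻¹) (hp : ‖q^4‖ < 1)
    {zj x : ℂ} (hzj : zj ≠ 0) (hx0 : x ≠ 0) (hne : x ≠ zj * q) :
    (-x * τ / zj) * ((-zj * τ) /
        (pochInf (x * q / zj) (q^4) * pochInf (zj * q^5 / x) (q^4))) =
      τ^2 * ((x - zj * τ⁻¹) * psiF q (x / zj)) := by
  have hc : (1 : ℂ) - zj * q / x ≠ 0 := by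
    intro h
    apply hne
    rw [sub_eq_zero] at h
    field_simp at h
    linear_combination h
  rw [psiF, show (x / zj) * q = x * q / zj by ring,
    show (x / zj)⁻¹ * q = zj * q / x by rw [inv_div]; ring,
    pochInf_shift hp (zj * q / x),
    show zj * q / x * q^4 = zj * q^5 / x by field_simp,
    show x - zj * τ⁻¹ = x * (1 - zj * q / x) by rw [hτ, inv_inv]; field_simp]
  rw [mul_div_assoc', show (-x * τ / zj) * (-zj * τ) = τ^2 * x by field_simp]
  rw [mul_one_div,
    show pochInf (x * q / zj) (q ^ 4) * ((1 - zj * q / x) * pochInf (zj * q ^ 5 / x) (q ^ 4))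
      = (1 - zj * q / x) * (pochInf (x * q / zj) (q ^ 4) * pochInf (zj * q ^ 5 / x) (q ^ 4))
      by ring,
    show x * (1 - zj * q / x) = (1 - zj * q / x) * x by ring,
    mul_div_assoc, mul_div_mul_left _ _ hc, mul_div_assoc]

end AuxPoch

/-- the vanishing contour integrals used in Lemma 2. -/
theorem stmt_3 (q : ℂ) (hq0 : 0 < ‖q‖) (hq1 : ‖q‖ < 1)
    (τ : ℂ) (hτ : τ = q⁻¹) (N : ℕ) (hN : 0 < N)
    (z : Fin N → ℂ) (hz : ∀ j, z j ≠ 0)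
    (θ : ℂ → (Fin N → ℂ) → ℂ)
    (hholo : ∀ w : Fin N → ℂ, DifferentiableOn ℂ (fun x => θ x w) {(0 : ℂ)}ᶜ)
    (hθ : ∀ (x : ℂ) (w : Fin N → ℂ), θ (x * τ ^ 4) w = θ x w * ∏ j, (-x * τ / w j))
    (r : ℝ) (hr1 : ∀ j, ‖z j * q‖ < r)
    (hr2 : ∀ j, r < ‖z j * q⁻¹‖) (k : ℕ) :
    (∮ x in C(0, r), x ^ ((k : ℤ) - 1) *
        ((∏ j, (x - z j * τ)) - τ ^ (2 * N + 4 * k) * ∏ j, (x - z j * τ⁻¹)) *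
        kerPsi1 q θ x z) = 0 := by
  have hq : q ≠ 0 := norm_ne_zero_iff.mp hq0.ne'
  have hτ0 : τ ≠ 0 := by rw [hτ]; exact inv_ne_zero hq
  have h40 : τ ^ 4 ≠ 0 := pow_ne_zero 4 hτ0
  have haq : ‖q‖ ≠ 0 := hq0.ne'
  have hp : ‖q ^ 4‖ < 1 := by
    rw [norm_pow]; exact pow_lt_one₀ (norm_nonneg q) hq1 (by norm_num)
  have hr0 : 0 < r := lt_of_le_of_lt (norm_nonneg (z ⟨0, hN⟩ * q)) (hr1 ⟨0, hN⟩)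
  have hA : ‖τ ^ 4‖ = (‖q‖)⁻¹ ^ 4 := by
    rw [hτ, norm_pow, norm_inv]
  have hA1 : 1 ≤ ‖τ ^ 4‖ := by
    rw [hA]
    exact one_le_pow₀ ((one_le_inv₀ hq0).mpr hq1.le)
  set R := ‖τ ^ 4‖ * r with hRdef
  have hrR : r ≤ R := le_mul_of_one_le_left hr0.le hA1
  -- nonvanishing on the annulus
  have key1 : ∀ x : ℂ, r ≤ ‖x‖ → ∀ (j : Fin N) (m : ℕ),
      (1 : ℂ) - (z j * q / x) * (q ^ 4) ^ m ≠ 0 := by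
    intro x hx j m h
    have hx0 : x ≠ 0 := by
      intro h0; rw [h0, norm_zero] at hx; linarith
    rw [sub_eq_zero] at h
    have heq : x = z j * q * (q ^ 4) ^ m := by
      field_simp at h; linear_combination h
    have hxle : ‖x‖ ≤ ‖z j * q‖ := by
      rw [heq, norm_mul, norm_pow, norm_pow]
      calc ‖z j * q‖ * (‖q‖ ^ 4) ^ m
          ≤ ‖z j * q‖ * 1 :=
            mul_le_mul_of_nonneg_left
              (pow_le_one₀ (by positivity) (pow_le_one₀ (norm_nonneg q) hq1.le))
              (norm_nonneg _)
        _ = ‖z j * q‖ := mul_one _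
    linarith [hr1 j]
  have key2 : ∀ x : ℂ, ‖x‖ ≤ R → ∀ (j : Fin N) (m : ℕ),
      (1 : ℂ) - (x * q ^ 5 / z j) * (q ^ 4) ^ m ≠ 0 := by
    intro x hx j m h
    rw [sub_eq_zero] at h
    have heq : z j = x * (q ^ 5 * (q ^ 4) ^ m) := by
      field_simp [hz j] at h; linear_combination h
    have habs : ‖z j‖ =
        ‖x‖ * (‖q‖ ^ 5 * ‖q‖ ^ (4 * m)) := by
      rw [heq, norm_mul, norm_mul, norm_pow, norm_pow, norm_pow, ← pow_mul]
    have hq4m : ‖q‖ ^ (4 * m) ≤ 1 :=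
      pow_le_one₀ (norm_nonneg q) hq1.le
    have hlow : r * ‖q‖ < ‖z j‖ := by
      have h2 := hr2 j
      rw [norm_mul, norm_inv] at h2
      calc r * ‖q‖ < ‖z j‖ * (‖q‖)⁻¹ * ‖q‖ :=
            mul_lt_mul_of_pos_right h2 hq0
        _ = ‖z j‖ := by field_simp
    have hup : ‖z j‖ ≤ r * ‖q‖ := by
      rw [habs]
      calc ‖x‖ * (‖q‖ ^ 5 * ‖q‖ ^ (4 * m))
          ≤ R * (‖q‖ ^ 5 * ‖q‖ ^ (4 * m)) := by
            apply mul_le_mul_of_nonneg_right hx (by positivity)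
        _ = (r * ‖q‖) * ‖q‖ ^ (4 * m) := by
            rw [hRdef, hA]; field_simp
        _ ≤ (r * ‖q‖) * 1 := by
            apply mul_le_mul_of_nonneg_left hq4m (by positivity)
        _ = r * ‖q‖ := mul_one _
    linarith
  -- the auxiliary function G
  obtain ⟨G, hGdef⟩ : ∃ G : ℂ → ℂ, ∀ y : ℂ, G y = θ y z * y ^ ((k : ℤ) - 1) *
      ∏ j, (-(z j) * τ) /
        (pochInf (y * q ^ 5 / z j) (q ^ 4) * pochInf (z j * q / y) (q ^ 4)) :=
    ⟨_, fun y => rfl⟩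
  have hGdiffAt : ∀ x : ℂ, r ≤ ‖x‖ → ‖x‖ ≤ R →
      DifferentiableAt ℂ G x := by
    intro x hx1 hx2
    have hx0 : x ≠ 0 := by
      intro h0; rw [h0, norm_zero] at hx1; linarith
    have hGL : G = fun y => θ y z * y ^ ((k : ℤ) - 1) *
        ∏ j, (-(z j) * τ) /
          (pochLim (q ^ 4) (y * q ^ 5 / z j) * pochLim (q ^ 4) (z j * q / y)) := by
      funext y; rw [hGdef y]; simp only [pochInf_eq hp]
    rw [hGL]
    apply DifferentiableAt.mul
    · apply DifferentiableAt.mul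
      · exact (hholo z).differentiableAt (compl_singleton_mem_nhds hx0)
      · exact differentiableAt_zpow.mpr (Or.inl hx0)
    · apply DifferentiableAt.fun_finsetProd
      intro j _
      apply DifferentiableAt.div (differentiableAt_const _)
      · apply DifferentiableAt.mul
        · exact ((pochLim_differentiable hp).differentiableAt).comp x
            ((differentiableAt_id.mul_const (q ^ 5)).div_const (z j))
        · exact ((pochLim_differentiable hp).differentiableAt).comp x
            ((differentiableAt_const (z j * q)).div differentiableAt_id hx0)
      · apply mul_ne_zero
        · rw [← pochInf_eq hp]
          exact pochInf_ne_zero hp _ (fun m => key2 x hx2 j m)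
        · rw [← pochInf_eq hp]
          exact pochInf_ne_zero hp _ (fun m => key1 x hx1 j m)
  -- annulus deformation
  have hGcont : ContinuousOn G (Metric.closedBall 0 R \ Metric.ball 0 r) := by
    intro x hx
    obtain ⟨hx2, hx1⟩ := hx
    rw [Metric.mem_closedBall, Complex.dist_eq, sub_zero] at hx2
    rw [Metric.mem_ball, Complex.dist_eq, sub_zero] at hx1
    exact ((hGdiffAt x (not_lt.mp hx1) hx2).continuousAt).continuousWithinAt
  have hannulus : (∮ x in C(0, R), G x) = ∮ x in C(0, r), G x := by
    refine Complex.circleIntegral_eq_of_differentiable_on_annulus_off_countable hr0 hrR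
      Set.countable_empty hGcont ?_
    intro x hx
    obtain ⟨⟨hx2, hx1⟩, -⟩ := hx
    rw [Metric.mem_ball, Complex.dist_eq, sub_zero] at hx2
    rw [Metric.mem_closedBall, Complex.dist_eq, sub_zero] at hx1
    exact hGdiffAt x (not_le.mp hx1).le hx2.le
  have hscale : (∮ x in C(0, R), G x) = ∮ y in C(0, r), τ ^ 4 * G (τ ^ 4 * y) := by
    rw [hRdef]; exact circleIntegral_scale G (τ ^ 4) r
  -- pointwise identity on the small circle
  have hI : Set.EqOn (fun x => x ^ ((k : ℤ) - 1) *
        ((∏ j, (x - z j * τ)) - τ ^ (2 * N + 4 * k) * ∏ j, (x - z j * τ⁻¹)) *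
        kerPsi1 q θ x z)
      (fun x => G x - τ ^ 4 * G (τ ^ 4 * x)) (Metric.sphere 0 r) := by
    intro x hx
    have hxr : ‖x‖ = r := by
      rw [Metric.mem_sphere, Complex.dist_eq, sub_zero] at hx; exact hx
    have hx0 : x ≠ 0 := by
      intro h0; rw [h0, norm_zero] at hxr; linarith
    have hne1 : ∀ j, x ≠ z j * τ := by
      intro j hE
      have := hr2 j
      rw [← hxr, hE, hτ] at this
      exact lt_irrefl _ this
    have hne2 : ∀ j, x ≠ z j * q := by
      intro j hE
      have := hr1 j
      rw [← hxr, hE] at this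
      exact lt_irrefl _ this
    have hI1 : G x = x ^ ((k : ℤ) - 1) * (∏ j, (x - z j * τ)) * kerPsi1 q θ x z := by
      rw [hGdef x, kerPsi1,
        Finset.prod_congr rfl (fun j _ => (factorA hq hτ hp (hz j) (hne1 j)).symm),
        Finset.prod_mul_distrib]
      ring
    have hI2 : τ ^ 4 * G (τ ^ 4 * x) = τ ^ (2 * N + 4 * k) *
        (x ^ ((k : ℤ) - 1) * (∏ j, (x - z j * τ⁻¹)) * kerPsi1 q θ x z) := by
      rw [show τ ^ 4 * x = x * τ ^ 4 from mul_comm _ _, hGdef (x * τ ^ 4), hθ x z, kerPsi1]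
      have hB : ∀ j : Fin N, (-x * τ / z j) * ((-(z j) * τ) /
          (pochInf ((x * τ ^ 4) * q ^ 5 / z j) (q ^ 4) *
            pochInf (z j * q / (x * τ ^ 4)) (q ^ 4))) =
          τ ^ 2 * ((x - z j * τ⁻¹) * psiF q (x / z j)) := by
        intro j
        rw [show (x * τ ^ 4) * q ^ 5 / z j = x * q / z j by rw [hτ]; field_simp [hq, hz j],
          show z j * q / (x * τ ^ 4) = z j * q ^ 5 / x by rw [hτ]; field_simp [hq, hz j]]
        exact factorB hq hτ hp (hz j) hx0 (hne2 j)
      have hprod : (∏ j, (-x * τ / z j)) * (∏ j, (-(z j) * τ) /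
            (pochInf ((x * τ ^ 4) * q ^ 5 / z j) (q ^ 4) *
              pochInf (z j * q / (x * τ ^ 4)) (q ^ 4))) =
          τ ^ (2 * N) * ((∏ j, (x - z j * τ⁻¹)) * ∏ j, psiF q (x / z j)) := by
        rw [← Finset.prod_mul_distrib, Finset.prod_congr rfl (fun j _ => hB j),
          Finset.prod_mul_distrib, Finset.prod_mul_distrib, Finset.prod_const,
          Finset.card_univ, Fintype.card_fin, ← pow_mul]
      have hpow : τ ^ 4 * (τ ^ 4) ^ ((k : ℤ) - 1) = τ ^ (4 * k) := by
        rw [zpow_sub_one₀ h40, zpow_natCast, ← pow_mul]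
        field_simp
      have hpow2 : τ ^ (2 * N) * τ ^ (4 * k) = τ ^ (2 * N + 4 * k) := (pow_add τ _ _).symm
      rw [show (x * τ ^ 4) ^ ((k : ℤ) - 1) = (τ ^ 4) ^ ((k : ℤ) - 1) * x ^ ((k : ℤ) - 1) from
        by rw [mul_zpow]; ring]
      linear_combination (τ ^ 4 * (τ ^ 4) ^ ((k : ℤ) - 1) * x ^ ((k : ℤ) - 1) * θ x z) * hprod
        + (x ^ ((k : ℤ) - 1) * θ x z * τ ^ (2 * N) *
            (∏ j, (x - z j * τ⁻¹)) * (∏ j, psiF q (x / z j))) * hpow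
        + (x ^ ((k : ℤ) - 1) * θ x z * (∏ j, (x - z j * τ⁻¹)) *
            (∏ j, psiF q (x / z j))) * hpow2
    calc (fun x => x ^ ((k : ℤ) - 1) *
        ((∏ j, (x - z j * τ)) - τ ^ (2 * N + 4 * k) * ∏ j, (x - z j * τ⁻¹)) *
        kerPsi1 q θ x z) x
        = x ^ ((k : ℤ) - 1) * (∏ j, (x - z j * τ)) * kerPsi1 q θ x z -
          τ ^ (2 * N + 4 * k) *
            (x ^ ((k : ℤ) - 1) * (∏ j, (x - z j * τ⁻¹)) * kerPsi1 q θ x z) := by ring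
      _ = G x - τ ^ 4 * G (τ ^ 4 * x) := by rw [hI1, hI2]
  -- integrability
  have hcont1 : ContinuousOn G (Metric.sphere 0 r) := by
    intro x hx
    have hxr : ‖x‖ = r := by
      rw [Metric.mem_sphere, Complex.dist_eq, sub_zero] at hx; exact hx
    exact ((hGdiffAt x hxr.ge (hxr ▸ hrR)).continuousAt).continuousWithinAt
  have hcont2 : ContinuousOn (fun y => τ ^ 4 * G (τ ^ 4 * y)) (Metric.sphere 0 r) := by
    intro x hx
    have hxr : ‖x‖ = r := by
      rw [Metric.mem_sphere, Complex.dist_eq, sub_zero] at hx; exact hx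
    have habs : ‖τ ^ 4 * x‖ = R := by
      rw [norm_mul, hxr, hRdef]
    have hd : DifferentiableAt ℂ G (τ ^ 4 * x) :=
      hGdiffAt _ (habs ▸ hrR) habs.le
    exact (continuousAt_const.mul (hd.continuousAt.comp
      ((continuous_mul_left (τ ^ 4)).continuousAt))).continuousWithinAt
  have hint1 : CircleIntegrable G 0 r := hcont1.circleIntegrable hr0.le
  have hint2 : CircleIntegrable (fun y => τ ^ 4 * G (τ ^ 4 * y)) 0 r :=
    hcont2.circleIntegrable hr0.le
  calc (∮ x in C(0, r), x ^ ((k : ℤ) - 1) *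
        ((∏ j, (x - z j * τ)) - τ ^ (2 * N + 4 * k) * ∏ j, (x - z j * τ⁻¹)) *
        kerPsi1 q θ x z)
      = ∮ x in C(0, r), (G x - τ ^ 4 * G (τ ^ 4 * x)) :=
        circleIntegral.integral_congr hr0.le hI
    _ = (∮ x in C(0, r), G x) - ∮ x in C(0, r), τ ^ 4 * G (τ ^ 4 * x) :=
        circleIntegral.integral_sub hint1 hint2
    _ = 0 := by rw [← hscale, hannulus, sub_self]
end

section
/- (Uniqueness of Δ^{(1l)}.) Let N ≥ 3. Suppose P ∈ ℂ[x, z₁,…,z_N] is homogeneous of total degree N−2 and satisfies, for every j with 2 ≤ j ≤ N, the restriction identity P|_{z_j = z₁τ²} = (x − z₁τ) · h^{(N−2)}(x|z₂,…,ẑ_j,…,z_N). Then P equals the polynomial Δ(x|z₁|z₂,…,z_N) = (x − z₁τ) · Σ_{κ=0}^{N−3} (1 − τ^{2(N−2−κ)}) (−τ)^κ x^{N−3−κ} · Σ_{λ=0}^{κ} (−z₁τ²)^λ σ_{κ−λ}(z₂,…,z_N). -/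
open Finset Function

lemma esym_zero {m : ℕ} (a : Fin m → ℂ) : esym a 0 = 1 := by simp [esym]

lemma esym_multiset {m : ℕ} (a : Fin m → ℂ) (κ : ℕ) :
    (Multiset.map a (Finset.univ.val)).esymm κ = esym a κ :=
  Finset.esymm_map_val a Finset.univ κ

lemma vieta {m : ℕ} (r : Fin m → ℂ) :
    ∏ i : Fin m, (Polynomial.X + Polynomial.C (r i)) =
      ∑ κ ∈ Finset.range (m + 1), Polynomial.C (esym r κ) * Polynomial.X ^ (m - κ) := by
  have h := Multiset.prod_X_add_C_eq_sum_esymm (Multiset.map r Finset.univ.val)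
  rw [Multiset.map_map,
    show Multiset.card (Multiset.map r Finset.univ.val) = m by simp] at h
  simp only [esym_multiset] at h
  exact h

lemma esym_scale {m : ℕ} (a : Fin m → ℂ) (t : ℂ) (κ : ℕ) :
    esym (fun i => -(a i * t)) κ = (-t) ^ κ * esym a κ := by
  simp only [esym, Finset.mul_sum]
  refine Finset.sum_congr rfl fun s hs => ?_
  have hc : s.card = κ := (Finset.mem_powersetCard.mp hs).2
  calc ∏ i ∈ s, -(a i * t) = ∏ i ∈ s, (-t) * a i := by
        refine Finset.prod_congr rfl fun i _ => by ring
    _ = (-t) ^ κ * ∏ i ∈ s, a i := by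
        rw [Finset.prod_mul_distrib, Finset.prod_const, hc]

lemma vieta' {m : ℕ} (a : Fin m → ℂ) (t : ℂ) :
    ∏ i : Fin m, (Polynomial.X - Polynomial.C (a i * t)) =
      ∑ κ ∈ Finset.range (m + 1), Polynomial.C ((-t) ^ κ * esym a κ) * Polynomial.X ^ (m - κ) := by
  have h := vieta (fun i => -(a i * t))
  simp only [map_neg, ← sub_eq_add_neg, esym_scale] at h
  exact h

lemma coeff_combine {τ : ℂ} (hτ : τ ≠ 0) {m κ : ℕ} (hκ : κ ≤ m) (σ : ℂ) :
    (-τ) ^ κ * σ - τ ^ (2 * m) * ((-τ⁻¹) ^ κ * σ) =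
      (1 - τ ^ (2 * (m - κ))) * (-τ) ^ κ * σ := by
  have h2m : 2 * m = κ + (κ + 2 * (m - κ)) := by omega
  have hτκ : (τ : ℂ) ^ κ ≠ 0 := pow_ne_zero _ hτ
  rw [h2m, pow_add, pow_add, neg_pow τ⁻¹, neg_pow τ, inv_pow]
  field_simp

lemma hN_sum {τ : ℂ} (hτ : τ ≠ 0) {m : ℕ} (c : Fin m → ℂ) :
    hN τ c = ∑ κ ∈ Finset.range m,
      Polynomial.C ((1 - τ ^ (2 * (m - κ))) * (-τ) ^ κ * esym c κ) * Polynomial.X ^ (m - 1 - κ) := by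
  have key : ((∏ j : Fin m, (Polynomial.X - Polynomial.C (c j * τ)))
      - Polynomial.C (τ ^ (2 * m)) * ∏ j : Fin m, (Polynomial.X - Polynomial.C (c j * τ⁻¹)))
      = (∑ κ ∈ Finset.range m,
          Polynomial.C ((1 - τ ^ (2 * (m - κ))) * (-τ) ^ κ * esym c κ)
            * Polynomial.X ^ (m - 1 - κ)) * Polynomial.X := by
    rw [vieta' c τ, vieta' c τ⁻¹, Finset.mul_sum, ← Finset.sum_sub_distrib]
    have step : ∀ κ ∈ Finset.range (m + 1),
        (Polynomial.C ((-τ) ^ κ * esym c κ) * Polynomial.X ^ (m - κ)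
          - Polynomial.C (τ ^ (2 * m)) * (Polynomial.C ((-τ⁻¹) ^ κ * esym c κ) * Polynomial.X ^ (m - κ)))
        = Polynomial.C ((1 - τ ^ (2 * (m - κ))) * (-τ) ^ κ * esym c κ) * Polynomial.X ^ (m - κ) := by
      intro κ hκ
      rw [Finset.mem_range] at hκ
      rw [← mul_assoc, ← Polynomial.C_mul, ← sub_mul, ← Polynomial.C_sub,
        coeff_combine hτ (by omega)]
    rw [Finset.sum_congr rfl step, Finset.sum_range_succ]
    have hlast : (1 - τ ^ (2 * (m - m))) = 0 := by simp
    rw [hlast, zero_mul, zero_mul, Polynomial.C_0, zero_mul, add_zero, Finset.sum_mul]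
    refine Finset.sum_congr rfl fun κ hκ => ?_
    rw [Finset.mem_range] at hκ
    have hmk : m - κ = (m - 1 - κ) + 1 := by omega
    rw [hmk, pow_succ]; ring
  rw [hN, key, Polynomial.divByMonic_eq_div _ Polynomial.monic_X]
  exact mul_div_cancel_right₀ _ Polynomial.X_ne_zero

lemma hN_eval {τ : ℂ} (hτ : τ ≠ 0) {m : ℕ} (c : Fin m → ℂ) (x : ℂ) :
    (hN τ c).eval x = ∑ κ ∈ Finset.range m,
      (1 - τ ^ (2 * (m - κ))) * (-τ) ^ κ * esym c κ * x ^ (m - 1 - κ) := by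
  rw [hN_sum hτ c]
  simp [Polynomial.eval_finset_sum]

lemma esym_succAbove {m : ℕ} (b : Fin (m + 1) → ℂ) (j : Fin (m + 1)) (κ : ℕ) :
    (∑ s ∈ Finset.powersetCard κ (Finset.univ.map (Fin.succAboveEmb j)),
      ∏ i ∈ s, b i) = esym (b ∘ j.succAbove) κ := by
  rw [Finset.powersetCard_map, Finset.sum_map]
  refine Finset.sum_congr rfl fun s _ => ?_
  have hme : (Finset.mapEmbedding (Fin.succAboveEmb j)).toEmbedding s
      = s.map (Fin.succAboveEmb j) := Finset.mapEmbedding_apply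
  rw [hme, Finset.prod_map]
  rfl

lemma esym_update {m : ℕ} (b : Fin (m + 1) → ℂ) (j : Fin (m + 1)) (t : ℂ) (μ : ℕ) :
    esym (Function.update b j t) (μ + 1) =
      esym (b ∘ j.succAbove) (μ + 1) + t * esym (b ∘ j.succAbove) μ := by
  classical
  have huniv : (Finset.univ : Finset (Fin (m + 1)))
      = insert j (Finset.univ.map (Fin.succAboveEmb j)) := by
    rw [Fin.univ_succAbove m j, Finset.cons_eq_insert]
  have hjnot : j ∉ Finset.univ.map (Fin.succAboveEmb j) := by
    simp only [Finset.mem_map, not_exists]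
    rintro i ⟨-, hi⟩
    exact Fin.succAbove_ne j i hi
  have hupd_on : ∀ s : Finset (Fin (m + 1)), s ⊆ Finset.univ.map (Fin.succAboveEmb j) →
      (∏ i ∈ s, Function.update b j t i) = ∏ i ∈ s, b i := by
    intro s hs
    refine Finset.prod_congr rfl fun i hi => ?_
    have hij : i ≠ j := by rintro rfl; exact hjnot (hs hi)
    exact Function.update_of_ne hij _ _
  rw [esym, huniv, Finset.powersetCard_succ_insert hjnot, Finset.sum_union, Finset.sum_image]
  · have h1 : (∑ s ∈ Finset.powersetCard (μ + 1) (Finset.univ.map (Fin.succAboveEmb j)),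
        ∏ i ∈ s, Function.update b j t i) = esym (b ∘ j.succAbove) (μ + 1) := by
      rw [← esym_succAbove b j (μ + 1)]
      exact Finset.sum_congr rfl fun s hs => hupd_on s (Finset.mem_powersetCard.mp hs).1
    have h2 : (∑ s ∈ Finset.powersetCard μ (Finset.univ.map (Fin.succAboveEmb j)),
        ∏ i ∈ insert j s, Function.update b j t i) = t * esym (b ∘ j.succAbove) μ := by
      rw [← esym_succAbove b j μ, Finset.mul_sum]
      refine Finset.sum_congr rfl fun s hs => ?_
      have hs' := (Finset.mem_powersetCard.mp hs).1
      have hjs : j ∉ s := fun h => hjnot (hs' h)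
      rw [Finset.prod_insert hjs, Function.update_self, hupd_on s hs']
    rw [h1, h2]
  · intro s hs s' hs' hss
    have h1 : j ∉ s := fun h => hjnot ((Finset.mem_powersetCard.mp hs).1 h)
    have h2 : j ∉ s' := fun h => hjnot ((Finset.mem_powersetCard.mp hs').1 h)
    have := congrArg (Finset.erase · j) hss
    simpa [Finset.erase_insert, h1, h2] using this
  · rw [Finset.disjoint_right]
    rintro s hs hs'
    have h1 : j ∉ s := fun h => hjnot ((Finset.mem_powersetCard.mp hs').1 h)
    rw [Finset.mem_image] at hs
    obtain ⟨u, -, rfl⟩ := hs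
    exact h1 (Finset.mem_insert_self _ _)

lemma telescope {m : ℕ} (b : Fin (m + 1) → ℂ) (j : Fin (m + 1)) (t : ℂ) (κ : ℕ) (hκ : κ ≤ m) :
    ∑ lam ∈ Finset.range (κ + 1), (-t) ^ lam * esym (Function.update b j t) (κ - lam)
      = esym (b ∘ j.succAbove) κ := by
  have key : ∀ lam, lam < κ →
      (-t) ^ lam * esym (Function.update b j t) (κ - lam)
        = ((-t) ^ lam * esym (b ∘ j.succAbove) (κ - lam))
          - ((-t) ^ (lam + 1) * esym (b ∘ j.succAbove) (κ - (lam + 1))) := by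
    intro lam hlam
    have h1 : κ - lam = (κ - lam - 1) + 1 := by omega
    have h2 : κ - (lam + 1) = κ - lam - 1 := by omega
    rw [h1, esym_update, h2, pow_succ]
    ring
  rw [Finset.sum_range_succ,
    Finset.sum_congr rfl (fun lam hlam => key lam (Finset.mem_range.mp hlam)),
    Finset.sum_range_sub',
    Nat.sub_self, esym_zero, Nat.sub_zero, pow_zero, one_mul, mul_one]
  simp [esym_zero]

lemma Delta1_update {K : ℕ} {τ : ℂ} (hτ : τ ≠ 0) (x z1 : ℂ) (b : Fin (K + 2) → ℂ)
    (j : Fin (K + 2)) :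
    Delta1 τ x z1 (Function.update b j (z1 * τ ^ 2))
      = (x - z1 * τ) * (hN τ (fun i : Fin (K + 1) => b (j.succAbove i))).eval x := by
  rw [Delta1, hN_eval hτ]
  congr 1
  refine Finset.sum_congr rfl fun κ hκ => ?_
  rw [Finset.mem_range] at hκ
  have h1 : K + 2 - 1 - κ = K + 1 - κ := by omega
  have h2 : K + 2 - 2 - κ = K + 1 - 1 - κ := by omega
  rw [h1, h2, telescope b j (z1 * τ ^ 2) κ (by omega)]
  have hc : (b ∘ j.succAbove) = fun i => b (j.succAbove i) := rfl
  rw [hc]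
  ring

noncomputable def esymP (K : ℕ) (μ : ℕ) : MvPolynomial (Fin (K + 4)) ℂ :=
  ∑ s ∈ Finset.powersetCard μ (Finset.univ : Finset (Fin (K + 2))),
    ∏ i ∈ s, MvPolynomial.X i.succ.succ

noncomputable def DeltaPoly (τ : ℂ) (K : ℕ) : MvPolynomial (Fin (K + 4)) ℂ :=
  (MvPolynomial.X 0 - MvPolynomial.C τ * MvPolynomial.X 1) *
    ∑ κ ∈ Finset.range (K + 1), MvPolynomial.C ((1 - τ ^ (2 * (K + 1 - κ))) * (-τ) ^ κ)
      * MvPolynomial.X 0 ^ (K - κ)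
      * ∑ lam ∈ Finset.range (κ + 1),
          (-(MvPolynomial.C (τ ^ 2) * MvPolynomial.X 1)) ^ lam * esymP K (κ - lam)

lemma DeltaPoly_eval (τ : ℂ) (K : ℕ) (x z1 : ℂ) (b : Fin (K + 2) → ℂ) :
    MvPolynomial.eval (Fin.cons x (Fin.cons z1 b)) (DeltaPoly τ K) = Delta1 τ x z1 b := by
  have h1 : (1 : Fin (K + 4)) = ((0 : Fin (K + 3)).succ) := rfl
  simp only [DeltaPoly, esymP, Delta1, map_mul, map_sub, map_sum, map_pow, map_neg,
    MvPolynomial.eval_C, MvPolynomial.eval_X, MvPolynomial.eval_prod, h1, Fin.cons_succ,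
    Fin.cons_zero]
  have h2 : K + 2 - 1 = K + 1 := rfl
  rw [h2]
  congr 1
  · ring
  · refine Finset.sum_congr rfl fun κ hκ => ?_
    have h3 : K + 2 - 2 - κ = K - κ := rfl
    rw [h3]
    simp only [esym]
    have hb : (-(τ ^ 2 * z1) : ℂ) = -(z1 * τ ^ 2) := by ring
    rw [hb]

lemma isHom_of_eq {σ : Type*} {p : MvPolynomial σ ℂ} {n n' : ℕ} (h : p.IsHomogeneous n)
    (hn : n = n') : p.IsHomogeneous n' := hn ▸ h

lemma esymP_hom (K μ : ℕ) : (esymP K μ).IsHomogeneous μ := by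
  apply MvPolynomial.IsHomogeneous.sum
  intro s hs
  have hc : s.card = μ := (Finset.mem_powersetCard.mp hs).2
  refine isHom_of_eq (MvPolynomial.IsHomogeneous.prod s _ (fun _ => 1)
    (fun i _ => MvPolynomial.isHomogeneous_X ℂ _)) ?_
  rw [Finset.sum_const, smul_eq_mul, mul_one, hc]

lemma DeltaPoly_hom (τ : ℂ) (K : ℕ) : (DeltaPoly τ K).IsHomogeneous (K + 1) := by
  have hfac : (MvPolynomial.X 0 - MvPolynomial.C τ * MvPolynomial.X 1 :
      MvPolynomial (Fin (K + 4)) ℂ).IsHomogeneous 1 :=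
    MvPolynomial.IsHomogeneous.sub (MvPolynomial.isHomogeneous_X ℂ 0)
      (MvPolynomial.isHomogeneous_C_mul_X τ 1)
  have hsum : (∑ κ ∈ Finset.range (K + 1),
      MvPolynomial.C ((1 - τ ^ (2 * (K + 1 - κ))) * (-τ) ^ κ)
      * MvPolynomial.X (0 : Fin (K + 4)) ^ (K - κ)
      * ∑ lam ∈ Finset.range (κ + 1),
          (-(MvPolynomial.C (τ ^ 2) * MvPolynomial.X 1)) ^ lam
            * esymP K (κ - lam)).IsHomogeneous K := by
    apply MvPolynomial.IsHomogeneous.sum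
    intro κ hκ
    rw [Finset.mem_range] at hκ
    have hinner : (∑ lam ∈ Finset.range (κ + 1),
        (-(MvPolynomial.C (τ ^ 2) * MvPolynomial.X (1 : Fin (K + 4)))) ^ lam
          * esymP K (κ - lam)).IsHomogeneous κ := by
      apply MvPolynomial.IsHomogeneous.sum
      intro lam hlam
      rw [Finset.mem_range] at hlam
      refine isHom_of_eq (MvPolynomial.IsHomogeneous.mul
        (MvPolynomial.IsHomogeneous.pow
          (MvPolynomial.IsHomogeneous.neg (MvPolynomial.isHomogeneous_C_mul_X (τ ^ 2) 1)) lam)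
        (esymP_hom K (κ - lam))) ?_
      omega
    refine isHom_of_eq (MvPolynomial.IsHomogeneous.mul
      (MvPolynomial.IsHomogeneous.C_mul
        (MvPolynomial.IsHomogeneous.pow (MvPolynomial.isHomogeneous_X ℂ (0 : Fin (K + 4)))
          (K - κ)) _) hinner) ?_
    omega
  refine isHom_of_eq (MvPolynomial.IsHomogeneous.mul hfac hsum) ?_
  omega

lemma factor_dvd {σ : Type*} [DecidableEq σ] (i : σ) (f : MvPolynomial σ ℂ)
    (p : MvPolynomial σ ℂ) :
    (MvPolynomial.X i - f) ∣
      (p - MvPolynomial.aeval (Function.update MvPolynomial.X i f) p) := by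
  induction p using MvPolynomial.induction_on with
  | C a => simp
  | add p q hp hq =>
      rw [map_add, add_sub_add_comm]
      exact dvd_add hp hq
  | mul_X p k hp =>
      rw [map_mul, MvPolynomial.aeval_X]
      have key : p * MvPolynomial.X k
          - MvPolynomial.aeval (Function.update MvPolynomial.X i f) p
            * Function.update MvPolynomial.X i f k
          = (p - MvPolynomial.aeval (Function.update MvPolynomial.X i f) p) * MvPolynomial.X k
            + MvPolynomial.aeval (Function.update MvPolynomial.X i f) p
              * (MvPolynomial.X k - Function.update MvPolynomial.X i f k) := by ring
      rw [key]
      refine dvd_add (hp.mul_right _) ?_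
      by_cases hk : k = i
      · subst hk
        rw [Function.update_self]
        exact Dvd.intro_left _ rfl
      · rw [Function.update_of_ne hk]
        simp

lemma eval_aeval_update {σ : Type*} [DecidableEq σ] (i : σ) (f : MvPolynomial σ ℂ)
    (p : MvPolynomial σ ℂ) (w : σ → ℂ) :
    MvPolynomial.eval w (MvPolynomial.aeval (Function.update MvPolynomial.X i f) p)
      = MvPolynomial.eval (Function.update w i (MvPolynomial.eval w f)) p := by
  rw [MvPolynomial.aeval_def, MvPolynomial.eval_eval₂]
  have hcomp : ((MvPolynomial.eval w).comp (algebraMap ℂ (MvPolynomial σ ℂ))) = RingHom.id ℂ := by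
    ext a
    simp [MvPolynomial.algebraMap_eq]
  rw [hcomp]
  have hpt : (fun s => MvPolynomial.eval w (Function.update MvPolynomial.X i f s))
      = Function.update w i (MvPolynomial.eval w f) := by
    funext s
    by_cases hs : s = i
    · subst hs; simp
    · rw [Function.update_of_ne hs, Function.update_of_ne hs, MvPolynomial.eval_X]
  rw [hpt]
  rfl

lemma prime_linear {σ : Type*} [DecidableEq σ] [Finite σ] (i i' : σ) (hii : i ≠ i') (c : ℂ)
    (hc : c ≠ 0) :
    Prime (MvPolynomial.X i - MvPolynomial.C c * MvPolynomial.X i' : MvPolynomial σ ℂ) := by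
  set f : MvPolynomial σ ℂ := MvPolynomial.C c * MvPolynomial.X i' with hf
  set s : MvPolynomial σ ℂ →+* MvPolynomial σ ℂ :=
    (MvPolynomial.aeval (Function.update MvPolynomial.X i f)).toRingHom with hs
  have hsf : s f = f := by
    simp only [hs, hf, AlgHom.toRingHom_eq_coe, RingHom.coe_coe, map_mul, MvPolynomial.aeval_C,
      MvPolynomial.aeval_X, MvPolynomial.algebraMap_eq]
    rw [Function.update_of_ne (Ne.symm hii)]
  have hker : Ideal.span {(MvPolynomial.X i - f : MvPolynomial σ ℂ)} = RingHom.ker s := by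
    apply le_antisymm
    · rw [Ideal.span_le, Set.singleton_subset_iff]
      have : s (MvPolynomial.X i - f) = 0 := by
        simp only [hs, AlgHom.toRingHom_eq_coe, RingHom.coe_coe, map_sub, MvPolynomial.aeval_X]
        rw [Function.update_self]
        have := hsf
        simp only [hs, AlgHom.toRingHom_eq_coe, RingHom.coe_coe] at this
        rw [this, sub_self]
      exact this
    · intro p hp
      rw [RingHom.mem_ker] at hp
      rw [Ideal.mem_span_singleton]
      have hd := factor_dvd i f p
      simp only [hs, AlgHom.toRingHom_eq_coe, RingHom.coe_coe] at hp
      rw [hp, sub_zero] at hd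
      exact hd
  have hne : (MvPolynomial.X i - f : MvPolynomial σ ℂ) ≠ 0 := by
    intro h
    have := congrArg (MvPolynomial.eval (fun s => if s = i then 1 else 0)) h
    simp [hf, if_neg (Ne.symm hii)] at this
  rw [← Ideal.span_singleton_prime hne]
  rw [hker]
  exact RingHom.ker_isPrime s

lemma prod_primes_dvd_of_pairwise {ι : Type*} [DecidableEq ι] {R : Type*}
    [CommMonoidWithZero R] [IsCancelMulZero R] (s : Finset ι) (p : ι → R) (D : R)
    (hp : ∀ i ∈ s, Prime (p i)) (hd : ∀ i ∈ s, p i ∣ D)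
    (hna : ∀ i ∈ s, ∀ j ∈ s, i ≠ j → ¬ Associated (p i) (p j)) :
    (∏ i ∈ s, p i) ∣ D := by
  induction s using Finset.induction_on with
  | empty => simp
  | @insert a s ha ih =>
      obtain ⟨E, hE⟩ := ih (fun i hi => hp i (Finset.mem_insert_of_mem hi))
        (fun i hi => hd i (Finset.mem_insert_of_mem hi))
        (fun i hi j hj hij => hna i (Finset.mem_insert_of_mem hi) j
          (Finset.mem_insert_of_mem hj) hij)
      have hpa : Prime (p a) := hp a (Finset.mem_insert_self _ _)
      have hda : p a ∣ (∏ i ∈ s, p i) * E := hE ▸ hd a (Finset.mem_insert_self _ _)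
      rcases hpa.dvd_mul.mp hda with h | h
      · exfalso
        obtain ⟨i, hi, hdvd⟩ := (Prime.dvd_finset_prod_iff hpa p).mp h
        exact hna a (Finset.mem_insert_self _ _) i (Finset.mem_insert_of_mem hi)
          (fun hai => ha (hai ▸ hi)) (hpa.associated_of_dvd (hp i (Finset.mem_insert_of_mem hi))
            hdvd)
      · obtain ⟨E', hE'⟩ := h
        rw [Finset.prod_insert ha]
        exact ⟨E', by rw [hE, hE', mul_left_comm, ← mul_assoc]⟩

lemma aeval_line {σ : Type*} {p : MvPolynomial σ ℂ} {n : ℕ} (hp : p.IsHomogeneous n)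
    (v : σ → ℂ) :
    MvPolynomial.aeval (fun i => Polynomial.C (v i) * Polynomial.X) p
      = Polynomial.C (MvPolynomial.eval v p) * Polynomial.X ^ n := by
  have key : ∀ d ∈ p.support,
      MvPolynomial.aeval (fun i => Polynomial.C (v i) * Polynomial.X)
          (MvPolynomial.monomial d (MvPolynomial.coeff d p))
        = Polynomial.C (MvPolynomial.eval v (MvPolynomial.monomial d (MvPolynomial.coeff d p)))
            * Polynomial.X ^ n := by
    intro d hd
    have hdeg : d.degree = n := by
      rw [Finsupp.degree_eq_weight_one]
      exact hp (MvPolynomial.mem_support_iff.mp hd)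
    rw [MvPolynomial.aeval_monomial, MvPolynomial.eval_monomial]
    have hprod : (d.prod fun i e => (Polynomial.C (v i) * Polynomial.X) ^ e)
        = Polynomial.C (d.prod fun i e => v i ^ e) * Polynomial.X ^ n := by
      rw [Finsupp.prod, Finsupp.prod]
      have : ∀ i ∈ d.support, (Polynomial.C (v i) * Polynomial.X) ^ d i
          = Polynomial.C (v i ^ d i) * Polynomial.X ^ d i := by
        intro i _
        rw [mul_pow, ← map_pow]
      rw [Finset.prod_congr rfl this, Finset.prod_mul_distrib, ← map_prod,
        Finset.prod_pow_eq_pow_sum]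
      rw [← hdeg]
      rfl
    rw [hprod, Polynomial.algebraMap_eq, map_mul, mul_assoc]
  conv_lhs => rw [p.as_sum]
  rw [map_sum, Finset.sum_congr rfl key, ← Finset.sum_mul, ← map_sum, ← map_sum,
    ← MvPolynomial.as_sum]

lemma one_ne_ss {K : ℕ} (j : Fin (K + 2)) : (1 : Fin (K + 4)) ≠ j.succ.succ := by
  simp only [Fin.ne_iff_vne, Fin.val_one, Fin.val_succ]
  omega

lemma zero_ne_ss {K : ℕ} (j : Fin (K + 2)) : (0 : Fin (K + 4)) ≠ j.succ.succ :=
  Ne.symm (Fin.succ_ne_zero _)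

lemma succ_zero_eq_one {K : ℕ} : ((0 : Fin (K + 3)).succ) = (1 : Fin (K + 4)) := by
  ext
  rw [Fin.val_succ, Fin.val_zero, Fin.val_one]

lemma not_assoc {K : ℕ} (τ : ℂ) (j j' : Fin (K + 2)) (hjj : j ≠ j') :
    ¬ Associated
      (MvPolynomial.X j.succ.succ - MvPolynomial.C (τ ^ 2) * MvPolynomial.X 1 :
        MvPolynomial (Fin (K + 4)) ℂ)
      (MvPolynomial.X j'.succ.succ - MvPolynomial.C (τ ^ 2) * MvPolynomial.X 1) := by
  rintro ⟨u, hu⟩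
  set w : Fin (K + 4) → ℂ := fun s => if s = j.succ.succ then 1 else 0 with hw
  have h1 : w 1 = 0 := if_neg (one_ne_ss j)
  have hja : w j.succ.succ = 1 := if_pos rfl
  have hjb : w j'.succ.succ = 0 := by
    refine if_neg fun h => hjj ?_
    exact (Fin.succ_injective _ (Fin.succ_injective _ h)).symm
  have heq := congrArg (MvPolynomial.eval w) hu
  rw [map_mul, map_sub, map_mul, MvPolynomial.eval_X, MvPolynomial.eval_X,
    MvPolynomial.eval_C, map_sub, map_mul, MvPolynomial.eval_X, MvPolynomial.eval_X,
    MvPolynomial.eval_C, h1, hja, hjb, mul_zero, sub_zero, sub_zero, one_mul] at heq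
  have hiu : IsUnit (MvPolynomial.eval w (u : MvPolynomial (Fin (K + 4)) ℂ)) :=
    (Units.isUnit u).map (MvPolynomial.eval w)
  rw [heq] at hiu
  exact not_isUnit_zero hiu

/-- uniqueness of `Δ^{(1l)}`.  Here `N = K + 3`; the variables of `P`
are ordered as `(x, z₁, z₂, …, z_N)`, and `P` is homogeneous of degree `N − 2 = K + 1`. -/
theorem stmt_7 (q : ℂ) (hq0 : 0 < ‖q‖) (hq1 : ‖q‖ < 1)
    (τ : ℂ) (hτ : τ = q⁻¹) (K : ℕ)
    (P : MvPolynomial (Fin (K + 4)) ℂ)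
    (hhom : P.IsHomogeneous (K + 1))
    (hres : ∀ (j : Fin (K + 2)) (x z1 : ℂ) (b : Fin (K + 2) → ℂ),
      MvPolynomial.eval (Fin.cons x (Fin.cons z1 (Function.update b j (z1 * τ ^ 2)))) P
        = (x - z1 * τ) * (hN τ (fun i : Fin (K + 1) => b (j.succAbove i))).eval x) :
    ∀ (x z1 : ℂ) (b : Fin (K + 2) → ℂ),
      MvPolynomial.eval (Fin.cons x (Fin.cons z1 b)) P = Delta1 τ x z1 b := by
  have hq : q ≠ 0 := fun h => by simp [h] at hq0
  have hτ0 : τ ≠ 0 := by rw [hτ]; exact inv_ne_zero hq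
  set D := P - DeltaPoly τ K with hD
  have hDhom : D.IsHomogeneous (K + 1) :=
    MvPolynomial.IsHomogeneous.sub hhom (DeltaPoly_hom τ K)
  -- each linear form divides D
  have hdvd : ∀ j : Fin (K + 2),
      (MvPolynomial.X j.succ.succ - MvPolynomial.C (τ ^ 2) * MvPolynomial.X 1 :
        MvPolynomial (Fin (K + 4)) ℂ) ∣ D := by
    intro j
    have hzero : MvPolynomial.aeval (Function.update MvPolynomial.X j.succ.succ
        (MvPolynomial.C (τ ^ 2) * MvPolynomial.X 1)) D = 0 := by
      apply MvPolynomial.funext (q := 0)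
      intro w
      rw [map_zero, eval_aeval_update]
      have hf : MvPolynomial.eval w
          (MvPolynomial.C (τ ^ 2) * MvPolynomial.X (1 : Fin (K + 4))) = τ ^ 2 * w 1 := by
        simp
      rw [hf]
      have hw' : Function.update w j.succ.succ (τ ^ 2 * w 1)
          = Fin.cons (w 0) (Fin.cons (w 1)
              (Function.update (fun i : Fin (K + 2) => w i.succ.succ) j (w 1 * τ ^ 2))) := by
        funext i
        refine Fin.cases ?_ (fun i' => ?_) i
        · rw [Function.update_of_ne (zero_ne_ss j), Fin.cons_zero]
        · refine Fin.cases ?_ (fun i'' => ?_) i'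
          · rw [Fin.cons_succ, Fin.cons_zero, succ_zero_eq_one,
              Function.update_of_ne (one_ne_ss j)]
          · rw [Fin.cons_succ, Fin.cons_succ]
            by_cases hij : i'' = j
            · subst hij
              rw [Function.update_self, Function.update_self, mul_comm]
            · rw [Function.update_of_ne hij,
                Function.update_of_ne (fun h => hij
                  (Fin.succ_injective _ (Fin.succ_injective _ h)))]
      rw [hw', hD, map_sub,
        hres j (w 0) (w 1) (fun i : Fin (K + 2) => w i.succ.succ),
        DeltaPoly_eval, Delta1_update hτ0, sub_self]
    have hfd := factor_dvd j.succ.succ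
      (MvPolynomial.C (τ ^ 2) * MvPolynomial.X 1) D
    rwa [hzero, sub_zero] at hfd
  have hproddvd : (∏ j : Fin (K + 2),
      (MvPolynomial.X j.succ.succ - MvPolynomial.C (τ ^ 2) * MvPolynomial.X 1 :
        MvPolynomial (Fin (K + 4)) ℂ)) ∣ D := by
    apply prod_primes_dvd_of_pairwise
    · intro j _
      exact prime_linear j.succ.succ 1 (fun h => one_ne_ss j h.symm) (τ ^ 2)
        (pow_ne_zero 2 hτ0)
    · intro j _
      exact hdvd j
    · intro j _ j' _ hjj
      exact not_assoc τ j j' hjj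
  obtain ⟨Q, hQ⟩ := hproddvd
  intro x z1 b
  set w : Fin (K + 4) → ℂ := Fin.cons x (Fin.cons z1 b) with hwdef
  have h0 : MvPolynomial.eval w D = 0 := by
    have hline := congrArg (MvPolynomial.aeval
      (fun i : Fin (K + 4) => Polynomial.C (w i) * Polynomial.X)) hQ
    rw [aeval_line hDhom w, map_mul, map_prod] at hline
    have hfac : ∀ j : Fin (K + 2), (MvPolynomial.aeval
        (fun i : Fin (K + 4) => Polynomial.C (w i) * Polynomial.X))
          (MvPolynomial.X j.succ.succ - MvPolynomial.C (τ ^ 2) * MvPolynomial.X 1)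
        = Polynomial.C (w j.succ.succ - τ ^ 2 * w 1) * Polynomial.X := by
      intro j
      rw [map_sub, map_mul, MvPolynomial.aeval_X, MvPolynomial.aeval_X,
        MvPolynomial.aeval_C, Polynomial.algebraMap_eq, map_sub, map_mul]
      ring
    rw [Finset.prod_congr rfl (fun j _ => hfac j), Finset.prod_mul_distrib,
      Finset.prod_const, Finset.card_univ, Fintype.card_fin, ← map_prod,
      mul_right_comm] at hline
    have hcoeff := congrArg (fun r : Polynomial ℂ => r.coeff (K + 1)) hline
    simp only [Polynomial.coeff_C_mul, Polynomial.coeff_X_pow,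
      Polynomial.coeff_mul_X_pow'] at hcoeff
    rw [if_pos (le_refl (K + 1)), if_neg (by omega : ¬ (K + 2 ≤ K + 1)), Nat.sub_self,
      Polynomial.coeff_C_zero] at hcoeff
    exact hcoeff
  rw [hD, map_sub, sub_eq_zero] at h0
  rw [hwdef] at h0
  rw [h0, DeltaPoly_eval]
end
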